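/- For every n ≥ 1, the graph 2K_n that is the disjoint union of two copies of the complete graph K_n satisfies ρ(2K_n) = 3n; moreover the disjoint union of K_n and K_{2n} witnesses the upper bound, i.e., (K_n ∪ K_{2n}) →r 2K_n. -/

import Mathlib

/-- `ArrowsR G H` (written `G →r H`) means: every proper vertex coloring of `G`
contains a rainbow induced subgraph isomorphic to `H`, i.e. an induced copy of `H`
(a graph embedding) whose vertices receive pairwise distinct colors. -/
def ArrowsR {α β : Type} (G : SimpleGraph α) (H : SimpleGraph β) : Prop :=
  ∀ c : α → ℕ, (∀ u v : α, G.Adj u v → c u ≠ c v) →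
    ∃ f : H ↪g G, Function.Injective fun h => c (f h)

/-- `rho H` is the minimum number of vertices of a graph `G` with `G →r H`. -/
noncomputable def rho {β : Type} (H : SimpleGraph β) : ℕ :=
  sInf {m : ℕ | ∃ G : SimpleGraph (Fin m), ArrowsR G H}

open SimpleGraph Finset

/-- Upper bound witness: `K_n ⊕ K_{2n} →r K_n ⊕ K_n`. -/
lemma upper (n : ℕ) :
    ArrowsR (completeGraph (Fin n) ⊕g completeGraph (Fin (2 * n)))
      (completeGraph (Fin n) ⊕g completeGraph (Fin n)) := by
  classical
  intro c hc
  have hinjL : Function.Injective fun i : Fin n => c (Sum.inl i) := by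
    intro i j hij
    by_contra hne
    exact hc _ _ (show (completeGraph (Fin n) ⊕g completeGraph (Fin (2*n))).Adj
      (Sum.inl i) (Sum.inl j) from hne) hij
  have hinjR : Function.Injective fun j : Fin (2*n) => c (Sum.inr j) := by
    intro i j hij
    by_contra hne
    exact hc _ _ (show (completeGraph (Fin n) ⊕g completeGraph (Fin (2*n))).Adj
      (Sum.inr i) (Sum.inr j) from hne) hij
  set S : Finset ℕ := Finset.univ.image (fun i : Fin n => c (Sum.inl i)) with hS
  have hScard : S.card = n := by
    rw [hS, Finset.card_image_of_injective _ hinjL, Finset.card_univ, Fintype.card_fin]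
  set T : Finset (Fin (2*n)) := Finset.univ.filter (fun j => c (Sum.inr j) ∉ S) with hT
  have hTcard : n ≤ T.card := by
    have h1 : (Finset.univ.filter (fun j : Fin (2*n) => c (Sum.inr j) ∈ S)).card ≤ n := by
      have := Finset.card_le_card_of_injOn (fun j : Fin (2*n) => c (Sum.inr j))
        (s := Finset.univ.filter (fun j => c (Sum.inr j) ∈ S)) (t := S)
        (by intro j hj; simpa using (Finset.mem_filter.mp hj).2)
        (fun a _ b _ h => hinjR h)
      omega
    have h2 := Finset.card_filter_add_card_filter_not
      (s := (Finset.univ : Finset (Fin (2*n)))) (p := fun j => c (Sum.inr j) ∈ S)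
    simp only [Finset.card_univ, Fintype.card_fin] at h2
    rw [hT]; omega
  obtain ⟨T', hT'sub, hT'card⟩ := Finset.exists_subset_card_eq hTcard
  let e := T'.orderIsoOfFin hT'card
  refine ⟨⟨⟨fun h => Sum.elim (fun i => Sum.inl i) (fun j => Sum.inr (e j : Fin (2*n))) h, ?_⟩, ?_⟩, ?_⟩
  · intro a b hab
    cases a <;> cases b <;> simp_all
  · intro a b
    cases a <;> cases b <;> simp [completeGraph]
    · exact Iff.rfl
    · exact fun h => h
    · exact fun h => h
    · exact not_congr (Subtype.coe_injective.comp e.injective).eq_iff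
  · intro a b hab
    simp only at hab
    have key : ∀ j : Fin n, c (Sum.inr (e j : Fin (2*n))) ∉ S := by
      intro j
      have : (e j : Fin (2*n)) ∈ T := hT'sub (e j).2
      rw [hT, Finset.mem_filter] at this
      exact this.2
    cases a with
    | inl i => cases b with
      | inl i' =>
          exact congrArg (Sum.inl (β := Fin n)) (hinjL (by exact hab))
      | inr j =>
          have h1 : c (Sum.inl i) = c (Sum.inr (e j : Fin (2*n))) := by exact hab
          have h2 : c (Sum.inr (e j : Fin (2*n))) ∈ S := by rw [← h1, hS]; simp
          exact absurd h2 (key j)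
    | inr j => cases b with
      | inl i =>
          have h1 : c (Sum.inl i) = c (Sum.inr (e j : Fin (2*n))) := by exact hab.symm
          have h2 : c (Sum.inr (e j : Fin (2*n))) ∈ S := by rw [← h1, hS]; simp
          exact absurd h2 (key j)
      | inr j' =>
          exact congrArg (Sum.inr (α := Fin n))
            (e.injective (Subtype.coe_injective (hinjR (by exact hab))))

lemma lower (n m : ℕ) (hn : 1 ≤ n) (hm : m < 3 * n) (G : SimpleGraph (Fin m))
    (h : ArrowsR G (completeGraph (Fin n) ⊕g completeGraph (Fin n))) : False := by
  classical
  -- a maximal "matching" given as an involution pairing nonadjacent vertices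
  obtain ⟨π, hπ, hmax⟩ :
      ∃ π ∈ Finset.univ.filter (fun π : Fin m → Fin m =>
          Function.Involutive π ∧ ∀ v, π v ≠ v → ¬ G.Adj v (π v)),
        ∀ π' ∈ Finset.univ.filter (fun π : Fin m → Fin m =>
          Function.Involutive π ∧ ∀ v, π v ≠ v → ¬ G.Adj v (π v)),
          (Finset.univ.filter fun v => π' v ≠ v).card ≤
            (Finset.univ.filter fun v => π v ≠ v).card := by
    apply Finset.exists_max_image
    exact ⟨id, Finset.mem_filter.mpr ⟨Finset.mem_univ _, fun x => rfl, fun v hv => absurd rfl hv⟩⟩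
  rw [Finset.mem_filter] at hπ
  obtain ⟨-, hinv, hnadj⟩ := hπ
  -- maximality: two distinct nonadjacent fixed points can be paired, contradiction
  have hmaximal : ∀ u v : Fin m, u ≠ v → ¬ G.Adj u v → π u = u → π v = v → False := by
    intro u v huv hadj hu hv
    set π' : Fin m → Fin m := fun w => if w = u then v else if w = v then u else π w with hπ'
    have hfix : ∀ w, w ≠ u → w ≠ v → π' w = π w := by
      intro w h1 h2; simp [hπ', h1, h2]
    have hne : ∀ w, w ≠ u → w ≠ v → π w ≠ u ∧ π w ≠ v := by
      intro w h1 h2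
      constructor
      · intro hw; exact h1 (by rw [← hinv w, hw, hu])
      · intro hw; exact h2 (by rw [← hinv w, hw, hv])
    have hinv' : Function.Involutive π' := by
      intro w
      by_cases h1 : w = u
      · subst h1; simp [hπ', huv.symm, huv]
      · by_cases h2 : w = v
        · subst h2; simp [hπ', huv]
        · obtain ⟨k1, k2⟩ := hne w h1 h2
          rw [hfix w h1 h2, hfix (π w) k1 k2, hinv w]
    have hnadj' : ∀ w, π' w ≠ w → ¬ G.Adj w (π' w) := by
      intro w hw
      by_cases h1 : w = u
      · subst h1; simpa [hπ', huv] using hadj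
      · by_cases h2 : w = v
        · subst h2; simp only [hπ', if_neg huv.symm, if_pos rfl]
          exact fun hq => hadj (hq.symm)
        · rw [hfix w h1 h2] at hw ⊢; exact hnadj w hw
    have hmem : π' ∈ Finset.univ.filter (fun π : Fin m → Fin m =>
        Function.Involutive π ∧ ∀ v, π v ≠ v → ¬ G.Adj v (π v)) := by
      simp only [Finset.mem_filter, Finset.mem_univ, true_and]
      exact ⟨hinv', hnadj'⟩
    have hsub : insert u (insert v (Finset.univ.filter fun w => π w ≠ w)) ⊆
        (Finset.univ.filter fun w => π' w ≠ w) := by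
      intro w hw
      simp only [Finset.mem_insert, Finset.mem_filter, Finset.mem_univ, true_and] at hw ⊢
      rcases hw with rfl | rfl | hw
      · simp [hπ', huv.symm]
      · simp [hπ', huv, huv.symm]
      · by_cases h1 : w = u
        · subst h1; simp [hπ', huv.symm]
        · by_cases h2 : w = v
          · subst h2; simp [hπ', huv, huv.symm]
          · rw [hfix w h1 h2]; exact hw
    have hcard := Finset.card_le_card hsub
    rw [Finset.card_insert_of_notMem (by
        simp only [Finset.mem_insert, Finset.mem_filter, Finset.mem_univ, true_and]
        push_neg
        exact ⟨huv, hu⟩),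
      Finset.card_insert_of_notMem (by
        simp only [Finset.mem_filter, Finset.mem_univ, true_and]
        exact fun hq => hq hv)] at hcard
    have := hmax π' hmem
    omega
  -- the coloring
  set c : Fin m → ℕ := fun v => min (v : ℕ) ((π v : Fin m) : ℕ) with hcdef
  have hproper : ∀ u v : Fin m, G.Adj u v → c u ≠ c v := by
    intro u v hadj hcc
    have huv : u ≠ v := G.ne_of_adj hadj
    have h1 : c u = (u : ℕ) ∨ c u = ((π u : Fin m) : ℕ) := min_cases _ _ |>.imp
      (fun h => h.1) (fun h => h.1)
    have h2 : c v = (v : ℕ) ∨ c v = ((π v : Fin m) : ℕ) := min_cases _ _ |>.imp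
      (fun h => h.1) (fun h => h.1)
    rcases h1 with h1 | h1 <;> rcases h2 with h2 | h2 <;> rw [h1, h2] at hcc
    · exact huv (Fin.val_injective hcc)
    · have : u = π v := Fin.val_injective hcc
      have hne : π v ≠ v := fun hq => huv (this.trans hq)
      exact hnadj v hne (this ▸ hadj.symm)
    · have : π u = v := Fin.val_injective hcc
      have hne : π u ≠ u := fun hq => huv (hq.symm.trans this)
      exact hnadj u hne (by rw [this]; exact hadj)
    · have : π u = π v := Fin.val_injective hcc
      exact huv (by rw [← hinv u, this, hinv v])
  obtain ⟨f, hf⟩ := h c hproper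
  -- the two cliques
  set A : Finset (Fin m) := Finset.univ.image (fun i : Fin n => f (Sum.inl i)) with hA
  set B : Finset (Fin m) := Finset.univ.image (fun i : Fin n => f (Sum.inr i)) with hB
  have hAcard : A.card = n := by
    rw [hA, Finset.card_image_of_injective _
      (fun a b hab => Sum.inl_injective (f.injective hab))]
    simp
  have hBcard : B.card = n := by
    rw [hB, Finset.card_image_of_injective _
      (fun a b hab => Sum.inr_injective (f.injective hab))]
    simp
  have hAB : Disjoint A B := by
    rw [Finset.disjoint_left]
    rintro a ha hb
    rw [hA, Finset.mem_image] at ha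
    rw [hB, Finset.mem_image] at hb
    obtain ⟨i, -, hi⟩ := ha
    obtain ⟨j, -, hj⟩ := hb
    exact absurd (f.injective (hi.trans hj.symm)) (by simp)
  have hAmem : ∀ v, v ∈ A → ∃ i : Fin n, f (Sum.inl i) = v := by
    intro v hv
    rw [hA, Finset.mem_image] at hv
    obtain ⟨i, -, hi⟩ := hv
    exact ⟨i, hi⟩
  have hBmem : ∀ v, v ∈ B → ∃ i : Fin n, f (Sum.inr i) = v := by
    intro v hv
    rw [hB, Finset.mem_image] at hv
    obtain ⟨i, -, hi⟩ := hv
    exact ⟨i, hi⟩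
  -- no cross pairs between A and B under π, and no pairs inside A or B
  have hcross : ∀ i j : Fin n, ¬ G.Adj (f (Sum.inl i)) (f (Sum.inr j)) := by
    intro i j hadj
    rw [f.map_adj_iff] at hadj
    simp at hadj
  have hclA : ∀ i i' : Fin n, i ≠ i' → G.Adj (f (Sum.inl i)) (f (Sum.inl i')) := by
    intro i i' hne
    rw [f.map_adj_iff]
    exact hne
  have hclB : ∀ i i' : Fin n, i ≠ i' → G.Adj (f (Sum.inr i)) (f (Sum.inr i')) := by
    intro i i' hne
    rw [f.map_adj_iff]
    exact hne
  -- key: matched vertices of A ∪ B have their partner outside A ∪ B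
  have hout : ∀ v ∈ A ∪ B, π v ≠ v → π v ∉ A ∪ B := by
    intro v hv hne hpv
    rw [Finset.mem_union] at hv hpv
    have hcmin : c v = c (π v) := by
      rw [hcdef]; simp only
      rw [hinv v, min_comm]
    rcases hv with hv | hv
    · obtain ⟨i, hi⟩ := hAmem v hv
      rcases hpv with hpv | hpv
      · obtain ⟨j, hj⟩ := hAmem _ hpv
        have hij : i ≠ j := fun hq => hne (by rw [← hj, ← hq]; exact hi)
        exact hnadj v hne (by rw [← hj, ← hi]; exact hclA i j hij)
      · obtain ⟨j, hj⟩ := hBmem _ hpv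
        have : c (f (Sum.inl i)) = c (f (Sum.inr j)) := by rw [hi, hj]; exact hcmin
        exact absurd (hf this) (by simp)
    · obtain ⟨i, hi⟩ := hBmem v hv
      rcases hpv with hpv | hpv
      · obtain ⟨j, hj⟩ := hAmem _ hpv
        have : c (f (Sum.inl j)) = c (f (Sum.inr i)) := by rw [hi, hj]; exact hcmin.symm
        exact absurd (hf this) (by simp)
      · obtain ⟨j, hj⟩ := hBmem _ hpv
        have hij : i ≠ j := fun hq => hne (by rw [← hj, ← hq]; exact hi)
        exact hnadj v hne (by rw [← hj, ← hi]; exact hclB i j hij)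
  -- counting
  have hABcard : (A ∪ B).card = 2 * n := by
    rw [Finset.card_union_of_disjoint hAB, hAcard, hBcard]; omega
  have hMcard : ((A ∪ B).filter fun v => π v ≠ v).card ≤ m - 2 * n := by
    have hinj : ∀ a ∈ (A ∪ B).filter (fun v => π v ≠ v),
        ∀ b ∈ (A ∪ B).filter (fun v => π v ≠ v), π a = π b → a = b :=
      fun a _ b _ hab => by rw [← hinv a, hab, hinv b]
    have hmaps : ∀ a ∈ (A ∪ B).filter (fun v => π v ≠ v),
        π a ∈ Finset.univ \ (A ∪ B) := by
      intro a ha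
      rw [Finset.mem_filter] at ha
      rw [Finset.mem_sdiff]
      exact ⟨Finset.mem_univ _, hout a ha.1 ha.2⟩
    have := Finset.card_le_card_of_injOn π hmaps hinj
    rw [Finset.card_sdiff_of_subset (Finset.subset_univ _), Finset.card_univ, Fintype.card_fin,
      hABcard] at this
    exact this
  -- there is a fixed point in A and in B
  have hfixA : ∃ a ∈ A, π a = a := by
    by_contra hq
    push_neg at hq
    have : A ⊆ (A ∪ B).filter fun v => π v ≠ v := by
      intro a ha
      rw [Finset.mem_filter, Finset.mem_union]
      exact ⟨Or.inl ha, hq a ha⟩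
    have := Finset.card_le_card this
    omega
  have hfixB : ∃ b ∈ B, π b = b := by
    by_contra hq
    push_neg at hq
    have : B ⊆ (A ∪ B).filter fun v => π v ≠ v := by
      intro b hb
      rw [Finset.mem_filter, Finset.mem_union]
      exact ⟨Or.inr hb, hq b hb⟩
    have := Finset.card_le_card this
    omega
  obtain ⟨a, ha, hafix⟩ := hfixA
  obtain ⟨b, hb, hbfix⟩ := hfixB
  have hab : a ≠ b := fun hq => Finset.disjoint_left.mp hAB ha (hq ▸ hb)
  have hnadj2 : ¬ G.Adj a b := by
    rw [hA, Finset.mem_image] at ha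
    rw [hB, Finset.mem_image] at hb
    obtain ⟨i, -, hi⟩ := ha
    obtain ⟨j, -, hj⟩ := hb
    rw [← hi, ← hj]
    exact hcross i j
  exact hmaximal a b hab hnadj2 hafix hbfix

lemma arrows_comap {α β γ : Type} (e : α ≃ β) (G : SimpleGraph β) (H : SimpleGraph γ)
    (h : ArrowsR G H) : ArrowsR (G.comap e) H := by
  intro c hc
  obtain ⟨f, hf⟩ := h (c ∘ e.symm) (by
    intro u v hadj
    have hadj' : (G.comap e).Adj (e.symm u) (e.symm v) := by
      show G.Adj (e (e.symm u)) (e (e.symm v))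
      rwa [e.apply_symm_apply, e.apply_symm_apply]
    exact hc _ _ hadj')
  refine ⟨⟨⟨fun x => e.symm (f x), fun a b hab => f.injective (e.symm.injective hab)⟩, ?_⟩, ?_⟩
  · intro a b
    show G.Adj (e (e.symm (f a))) (e (e.symm (f b))) ↔ _
    rw [e.apply_symm_apply, e.apply_symm_apply, f.map_adj_iff]
  · intro a b hab
    exact hf hab

/-- `ρ(2K_n) = 3n`, and the disjoint union `K_n ∪ K_{2n}` witnesses the upper bound. -/
theorem stmt5 (n : ℕ) (hn : 1 ≤ n) :
    rho (completeGraph (Fin n) ⊕g completeGraph (Fin n)) = 3 * n ∧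
    ArrowsR (completeGraph (Fin n) ⊕g completeGraph (Fin (2 * n)))
      (completeGraph (Fin n) ⊕g completeGraph (Fin n)) := by
  refine ⟨?_, upper n⟩
  have e : Fin (3 * n) ≃ Fin n ⊕ Fin (2 * n) :=
    (finCongr (by omega)).trans finSumFinEquiv.symm
  have hmem : 3 * n ∈ {m : ℕ | ∃ G : SimpleGraph (Fin m),
      ArrowsR G (completeGraph (Fin n) ⊕g completeGraph (Fin n))} :=
    ⟨(completeGraph (Fin n) ⊕g completeGraph (Fin (2 * n))).comap e,
      arrows_comap e _ _ (upper n)⟩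
  apply le_antisymm
  · exact Nat.sInf_le hmem
  · refine le_csInf ⟨_, hmem⟩ ?_
    intro m hm
    obtain ⟨G, hG⟩ := hm
    by_contra hlt
    push_neg at hlt
    exact lower n m hn hlt G hG
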